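/- For every homogeneous element T of the algebra (˜Ω, *) obtained by Connes' X-trick from (Ω, d, θ), one has δ(δT) = 0; that is, the X-trick differential δ squares to zero. -/
import Mathlib


namespace XTrick

/-- The data entering Connes' `X`-trick: a nonnegatively graded unital complex
algebra `Ω = ⊕_{j≥0} Ω^j` (graded by submodules `G j`, with `G j = 0` for
`j < 0`), a degree-one map `d` satisfying the graded Leibniz rule, and a
curvature `θ ∈ Ω²` with `dθ = 0` and `d²ω = θω − ωθ`. -/
structure XData (Ω : Type*) [Ring Ω] [Algebra ℂ Ω] : Type _ where
  /-- the grading `G j = Ω^j` -/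
  G : ℤ → Submodule ℂ Ω
  neg_bot : ∀ j : ℤ, j < 0 → G j = ⊥
  one_mem : (1 : Ω) ∈ G 0
  mul_mem : ∀ {j j' : ℤ} {x y : Ω}, x ∈ G j → y ∈ G j' → x * y ∈ G (j + j')
  /-- the degree-one map `d` -/
  d : Ω →ₗ[ℂ] Ω
  d_mem : ∀ {j : ℤ} {x : Ω}, x ∈ G j → d x ∈ G (j + 1)
  leibniz : ∀ {j : ℤ} {x : Ω}, x ∈ G j → ∀ y : Ω,
    d (x * y) = d x * y + ((-1 : ℂ) ^ j) • (x * d y)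
  /-- the curvature `θ` -/
  theta : Ω
  theta_mem : theta ∈ G 2
  d_theta : d theta = 0
  d_sq : ∀ x : Ω, d (d x) = theta * x - x * theta

noncomputable section

variable {Ω : Type*} [Ring Ω] [Algebra ℂ Ω]

/-- The matrix `Θ = diag(1, θ)`. -/
def XData.ThetaM (D : XData Ω) : Matrix (Fin 2) (Fin 2) Ω :=
  !![1, 0; 0, D.theta]

/-- The product `T * T' = T Θ T'` on `˜Ω = M₂(Ω)`. -/
def XData.starMul (D : XData Ω) (T T' : Matrix (Fin 2) (Fin 2) Ω) :
    Matrix (Fin 2) (Fin 2) Ω :=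
  T * D.ThetaM * T'

/-- `T ∈ ˜Ω` is homogeneous of degree `m`:
`T₁₁ ∈ Ω^m`, `T₁₂, T₂₁ ∈ Ω^{m−1}`, `T₂₂ ∈ Ω^{m−2}`. -/
def XData.Homog (D : XData Ω) (m : ℤ) (T : Matrix (Fin 2) (Fin 2) Ω) : Prop :=
  T 0 0 ∈ D.G m ∧ T 0 1 ∈ D.G (m - 1) ∧ T 1 0 ∈ D.G (m - 1) ∧ T 1 1 ∈ D.G (m - 2)

/-- The `X`-trick differential `δ` on elements of degree `m`. -/
def XData.deltaOp (D : XData Ω) (m : ℤ) (T : Matrix (Fin 2) (Fin 2) Ω) :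
    Matrix (Fin 2) (Fin 2) Ω :=
  !![D.d (T 0 0), D.d (T 0 1); -(D.d (T 1 0)), -(D.d (T 1 1))] +
    !![0, -D.theta; 1, 0] * T +
    ((-1 : ℂ) ^ m) • (T * !![0, 1; -D.theta, 0])

/-- The functional `Φ(T) = ∫ T₁₁ − (−1)ᵏ ∫ T₂₂ θ` on degree-`k` elements. -/
def XData.Phi (D : XData Ω) (intg : Ω →ₗ[ℂ] ℂ) (k : ℤ)
    (T : Matrix (Fin 2) (Fin 2) Ω) : ℂ :=
  intg (T 0 0) - ((-1 : ℂ) ^ k) * intg (T 1 1 * D.theta)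

omit [Algebra ℂ Ω] in
lemma fin2_zero {a b c d : Ω} (h1 : a = 0) (h2 : b = 0) (h3 : c = 0) (h4 : d = 0) :
    !![a, b; c, d] = (0 : Matrix (Fin 2) (Fin 2) Ω) := by
  subst h1 h2 h3 h4
  ext i j
  fin_cases i <;> fin_cases j <;> rfl

lemma delta_lit (D : XData Ω) (m : ℤ) (a b c e : Ω) :
    D.deltaOp m !![a, b; c, e] =
      !![D.d a - D.theta * c - ((-1:ℂ)^m) • (b * D.theta),
         D.d b - D.theta * e + ((-1:ℂ)^m) • a;
         -(D.d c) + a - ((-1:ℂ)^m) • (e * D.theta),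
         -(D.d e) + b + ((-1:ℂ)^m) • c] := by
  ext i j
  fin_cases i <;> fin_cases j <;>
    simp [XData.deltaOp, Matrix.mul_apply, Fin.sum_univ_two, sub_eq_add_neg]

/-- the `X`-trick differential squares to zero: `δ(δT) = 0`
for every homogeneous `T`. -/
theorem stmt14 (D : XData Ω) (m : ℤ) (T : Matrix (Fin 2) (Fin 2) Ω)
    (hT : D.Homog m T) :
    D.deltaOp (m + 1) (D.deltaOp m T) = 0 := by
  obtain ⟨ha, hb, hc, he⟩ := hT
  set a := T 0 0; set b := T 0 1; set c := T 1 0; set e := T 1 1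
  have hTe : T = !![a, b; c, e] := by
    ext i j; fin_cases i <;> fin_cases j <;> rfl
  rw [hTe, delta_lit, delta_lit]
  set s : ℂ := (-1 : ℂ) ^ m with hs
  have hsm1 : ((-1 : ℂ)) ^ (m + 1) = -s := by
    rw [zpow_add_one₀ (by norm_num : (-1:ℂ) ≠ 0)]; ring
  have hs2 : s * s = 1 := by rw [hs, ← mul_zpow]; norm_num
  have hss : ∀ x : Ω, s • s • x = x := fun x => by rw [smul_smul, hs2, one_smul]
  have hdθ : ∀ x : Ω, D.d (D.theta * x) = D.theta * D.d x := by
    intro x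
    rw [D.leibniz D.theta_mem, D.d_theta, zero_mul, zero_add]
    norm_num
  have hdθr : ∀ {j : ℤ} {x : Ω}, x ∈ D.G j → D.d (x * D.theta) = D.d x * D.theta := by
    intro j x hx
    rw [D.leibniz hx, D.d_theta, mul_zero, smul_zero, add_zero]
  refine fin2_zero ?_ ?_ ?_ ?_ <;>
  · simp only [hsm1, map_add, map_sub, map_neg, map_smul, hdθ,
      hdθr ha, hdθr hb, hdθr hc, hdθr he, D.d_sq, D.d_theta]
    simp only [mul_add, add_mul, mul_sub, sub_mul, mul_neg, neg_mul, smul_add, smul_sub,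
      smul_neg, neg_smul, mul_smul_comm, smul_mul_assoc, hss, mul_one, one_mul,
      zero_mul, mul_zero, mul_assoc, neg_neg, zero_add, add_zero, smul_zero]
    abel


end

end XTrick
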